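/- Given d+1 pairs of points F_1, ..., F_{d+1} in R^d, one can choose one point from each pair, forming a set A, so that the set B of the remaining points satisfies: the convex hull of A and the convex hull of B intersect. Moreover, the intersection can be witnessed with equal convex coefficients: there exist nonnegative alpha_1, ..., alpha_{d+1} summing to 1 with sum_i alpha_i x_i = sum_i alpha_i y_i where F_i = {x_i, y_i} after suitable labeling. -/

import Mathlib

/-- Colorful Radon theorem with equal coefficients: given d+1 pairs of points
F_i = {x i, y i} in ℝ^d, one can relabel each pair (choose σ i : Bool) so that the
convex hulls of the chosen points and of the remaining points intersect; moreover the
intersection is witnessed by the same convex coefficients on both sides. -/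
theorem colorful_radon_equal_coefficients (d : ℕ) (x y : Fin (d + 1) → (Fin d → ℝ)) :
    ∃ σ : Fin (d + 1) → Bool,
      ((convexHull ℝ (Set.range (fun i => if σ i then x i else y i))) ∩
        (convexHull ℝ (Set.range (fun i => if σ i then y i else x i)))).Nonempty ∧
      ∃ α : Fin (d + 1) → ℝ, (∀ i, 0 ≤ α i) ∧ (∑ i, α i = 1) ∧
        (∑ i, α i • (if σ i then x i else y i)) =
          (∑ i, α i • (if σ i then y i else x i)) := by
  set v : Fin (d + 1) → (Fin d → ℝ) := fun i => x i - y i with hv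
  have hnli : ¬ LinearIndependent ℝ v := by
    intro h
    have hc := h.fintype_card_le_finrank
    simp [Module.finrank_fintype_fun_eq_card] at hc
  obtain ⟨g, hg0, i0, hi0⟩ := Fintype.not_linearIndependent_iff.mp hnli
  set σ : Fin (d + 1) → Bool := fun i => decide (0 ≤ g i) with hσ
  set S : ℝ := ∑ i, |g i| with hS
  have hSpos : 0 < S := by
    apply Finset.sum_pos' (fun i _ => abs_nonneg _)
    exact ⟨i0, Finset.mem_univ _, abs_pos.mpr hi0⟩
  set α : Fin (d + 1) → ℝ := fun i => |g i| / S with hα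
  have hα0 : ∀ i, 0 ≤ α i := fun i => div_nonneg (abs_nonneg _) hSpos.le
  have hα1 : ∑ i, α i = 1 := by
    rw [hα, ← Finset.sum_div]
    field_simp
    exact hS.symm
  have key : (∑ i, α i • (if σ i then x i else y i)) =
      (∑ i, α i • (if σ i then y i else x i)) := by
    have hsub : ∑ i, (α i • (if σ i then x i else y i) - α i • (if σ i then y i else x i))
        = 0 := by
      have heach : ∀ i, α i • (if σ i then x i else y i) - α i • (if σ i then y i else x i)
          = (g i / S) • v i := by
        intro i
        by_cases h : 0 ≤ g i
        · simp only [hσ, decide_eq_true_eq, if_pos h, hα, abs_of_nonneg h, hv, ← smul_sub]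
        · simp only [hσ, decide_eq_true_eq, if_neg h, hα, abs_of_neg (lt_of_not_ge h), hv,
            ← smul_sub]
          module
      rw [Finset.sum_congr rfl (fun i _ => heach i)]
      have : ∀ i, (g i / S) • v i = S⁻¹ • (g i • v i) := by
        intro i
        rw [smul_smul, div_eq_mul_inv, mul_comm]
      rw [Finset.sum_congr rfl (fun i _ => this i), ← Finset.smul_sum, hg0, smul_zero]
    have hsub' : (∑ i, α i • (if σ i then x i else y i))
        - (∑ i, α i • (if σ i then y i else x i)) = 0 := by
      rw [← Finset.sum_sub_distrib]; exact hsub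
    exact sub_eq_zero.mp hsub'
  have hmem : ∀ f : Fin (d + 1) → (Fin d → ℝ),
      (∑ i, α i • f i) ∈ convexHull ℝ (Set.range f) := by
    intro f
    have h := Finset.centerMass_mem_convexHull (Finset.univ) (fun i _ => hα0 i)
      (by rw [hα1]; norm_num) (fun i _ => Set.mem_range_self (f := f) i)
    rwa [Finset.centerMass_eq_of_sum_1 _ _ hα1] at h
  refine ⟨σ, ⟨∑ i, α i • (if σ i then x i else y i), hmem _, ?_⟩, α, hα0, hα1, key⟩
  rw [key]
  exact hmem _
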